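/- The sl₃ generator τ₁ = X₂Y₂(X₃Y₃ + X₂(Y₂+Y₃) + X₁(Y₁+Y₂+Y₃)) / ((X₂Y₂ + X₁(Y₁+Y₂))(X₃Y₃ + X₂(Y₂+Y₃))) is annihilated by the operator D_Y = Y₁(Y₁+2Y₂+2Y₃)∂/∂Y₁ + Y₂(Y₂+2Y₃)∂/∂Y₂ + Y₃²∂/∂Y₃ − X₁(Y₁+Y₂+Y₃)∂/∂X₁ − X₂(Y₂+Y₃)∂/∂X₂ − X₃Y₃∂/∂X₃. -/

import Mathlib

/-- The `sl₃` lattice `W`-algebra generator `τ₁`. -/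
noncomputable def tauSl3 (x1 x2 x3 y1 y2 y3 : ℝ) : ℝ :=
  x2 * y2 * (x3 * y3 + x2 * (y2 + y3) + x1 * (y1 + y2 + y3)) /
    ((x2 * y2 + x1 * (y1 + y2)) * (x3 * y3 + x2 * (y2 + y3)))

private lemma quadAt (a b c v : ℝ) :
    HasDerivAt (fun s : ℝ => a + b * s + c * s ^ 2) (b + 2 * c * v) v := by
  have h1 : HasDerivAt (fun s : ℝ => b * s) b v := by
    simpa using (hasDerivAt_id v).const_mul b
  have h2 : HasDerivAt (fun s : ℝ => c * s ^ 2) (c * (2 * v)) v := by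
    simpa using (hasDerivAt_pow 2 v).const_mul c
  have h := ((h1.add h2).const_add a).congr_of_eventuallyEq
    (Filter.Eventually.of_forall fun s => by simp only [Pi.add_apply]; ring : (fun s : ℝ => a + b * s + c * s ^ 2) =ᶠ[nhds v] _)
  rw [show b + 2 * c * v = b + c * (2 * v) by ring]
  exact h

/-- `τ₁` is annihilated by
`D_Y = Y₁(Y₁+2Y₂+2Y₃)∂/∂Y₁ + Y₂(Y₂+2Y₃)∂/∂Y₂ + Y₃²∂/∂Y₃
      − X₁(Y₁+Y₂+Y₃)∂/∂X₁ − X₂(Y₂+Y₃)∂/∂X₂ − X₃Y₃∂/∂X₃`. -/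
theorem stmt_11 (X1 X2 X3 Y1 Y2 Y3 : ℝ)
    (hA : X2 * Y2 + X1 * (Y1 + Y2) ≠ 0) (hB : X3 * Y3 + X2 * (Y2 + Y3) ≠ 0) :
    Y1 * (Y1 + 2 * Y2 + 2 * Y3) * deriv (fun t => tauSl3 X1 X2 X3 t Y2 Y3) Y1
      + Y2 * (Y2 + 2 * Y3) * deriv (fun t => tauSl3 X1 X2 X3 Y1 t Y3) Y2
      + Y3 ^ 2 * deriv (fun t => tauSl3 X1 X2 X3 Y1 Y2 t) Y3
      - X1 * (Y1 + Y2 + Y3) * deriv (fun t => tauSl3 t X2 X3 Y1 Y2 Y3) X1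
      - X2 * (Y2 + Y3) * deriv (fun t => tauSl3 X1 t X3 Y1 Y2 Y3) X2
      - X3 * Y3 * deriv (fun t => tauSl3 X1 X2 t Y1 Y2 Y3) X3 = 0 := by
  have hAB : (X2 * Y2 + X1 * (Y1 + Y2)) * (X3 * Y3 + X2 * (Y2 + Y3)) ≠ 0 :=
    mul_ne_zero hA hB
  -- Y1
  have hN1 : HasDerivAt
      (fun t => X2 * Y2 * (X3 * Y3 + X2 * (Y2 + Y3) + X1 * (t + Y2 + Y3)))
      (X2 * Y2 * X1 + 2 * 0 * Y1) Y1 :=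
    (quadAt (X2 * Y2 * (X3 * Y3 + X2 * (Y2 + Y3) + X1 * (Y2 + Y3))) (X2 * Y2 * X1) 0
      Y1).congr_of_eventuallyEq (Filter.Eventually.of_forall fun t => by ring)
  have hD1 : HasDerivAt
      (fun t => (X2 * Y2 + X1 * (t + Y2)) * (X3 * Y3 + X2 * (Y2 + Y3)))
      (X1 * (X3 * Y3 + X2 * (Y2 + Y3)) + 2 * 0 * Y1) Y1 :=
    (quadAt ((X2 * Y2 + X1 * Y2) * (X3 * Y3 + X2 * (Y2 + Y3)))
      (X1 * (X3 * Y3 + X2 * (Y2 + Y3))) 0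
      Y1).congr_of_eventuallyEq (Filter.Eventually.of_forall fun t => by ring)
  have d1 : deriv (fun t =>
      X2 * Y2 * (X3 * Y3 + X2 * (Y2 + Y3) + X1 * (t + Y2 + Y3)) /
        ((X2 * Y2 + X1 * (t + Y2)) * (X3 * Y3 + X2 * (Y2 + Y3)))) Y1 =
      ((X2 * Y2 * X1 + 2 * 0 * Y1) *
          ((X2 * Y2 + X1 * (Y1 + Y2)) * (X3 * Y3 + X2 * (Y2 + Y3)))
        - X2 * Y2 * (X3 * Y3 + X2 * (Y2 + Y3) + X1 * (Y1 + Y2 + Y3)) *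
          (X1 * (X3 * Y3 + X2 * (Y2 + Y3)) + 2 * 0 * Y1)) /
        ((X2 * Y2 + X1 * (Y1 + Y2)) * (X3 * Y3 + X2 * (Y2 + Y3))) ^ 2 :=
    (hN1.div hD1 hAB).deriv
  -- Y2
  have hN2 : HasDerivAt
      (fun t => X2 * t * (X3 * Y3 + X2 * (t + Y3) + X1 * (Y1 + t + Y3)))
      (X2 * (X3 * Y3 + X2 * Y3 + X1 * Y1 + X1 * Y3) + 2 * (X2 * (X2 + X1)) * Y2) Y2 :=
    (quadAt 0 (X2 * (X3 * Y3 + X2 * Y3 + X1 * Y1 + X1 * Y3)) (X2 * (X2 + X1))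
      Y2).congr_of_eventuallyEq (Filter.Eventually.of_forall fun t => by ring)
  have hD2 : HasDerivAt
      (fun t => (X2 * t + X1 * (Y1 + t)) * (X3 * Y3 + X2 * (t + Y3)))
      ((X2 + X1) * (X3 * Y3 + X2 * Y3) + X1 * Y1 * X2 + 2 * ((X2 + X1) * X2) * Y2) Y2 :=
    (quadAt (X1 * Y1 * (X3 * Y3 + X2 * Y3))
      ((X2 + X1) * (X3 * Y3 + X2 * Y3) + X1 * Y1 * X2) ((X2 + X1) * X2)
      Y2).congr_of_eventuallyEq (Filter.Eventually.of_forall fun t => by ring)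
  have d2 : deriv (fun t =>
      X2 * t * (X3 * Y3 + X2 * (t + Y3) + X1 * (Y1 + t + Y3)) /
        ((X2 * t + X1 * (Y1 + t)) * (X3 * Y3 + X2 * (t + Y3)))) Y2 =
      ((X2 * (X3 * Y3 + X2 * Y3 + X1 * Y1 + X1 * Y3) + 2 * (X2 * (X2 + X1)) * Y2) *
          ((X2 * Y2 + X1 * (Y1 + Y2)) * (X3 * Y3 + X2 * (Y2 + Y3)))
        - X2 * Y2 * (X3 * Y3 + X2 * (Y2 + Y3) + X1 * (Y1 + Y2 + Y3)) *
          ((X2 + X1) * (X3 * Y3 + X2 * Y3) + X1 * Y1 * X2 + 2 * ((X2 + X1) * X2) * Y2)) /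
        ((X2 * Y2 + X1 * (Y1 + Y2)) * (X3 * Y3 + X2 * (Y2 + Y3))) ^ 2 :=
    (hN2.div hD2 hAB).deriv
  -- Y3
  have hN3 : HasDerivAt
      (fun t => X2 * Y2 * (X3 * t + X2 * (Y2 + t) + X1 * (Y1 + Y2 + t)))
      (X2 * Y2 * (X3 + X2 + X1) + 2 * 0 * Y3) Y3 :=
    (quadAt (X2 * Y2 * (X2 * Y2 + X1 * Y1 + X1 * Y2)) (X2 * Y2 * (X3 + X2 + X1)) 0
      Y3).congr_of_eventuallyEq (Filter.Eventually.of_forall fun t => by ring)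
  have hD3 : HasDerivAt
      (fun t => (X2 * Y2 + X1 * (Y1 + Y2)) * (X3 * t + X2 * (Y2 + t)))
      ((X2 * Y2 + X1 * (Y1 + Y2)) * (X3 + X2) + 2 * 0 * Y3) Y3 :=
    (quadAt ((X2 * Y2 + X1 * (Y1 + Y2)) * (X2 * Y2))
      ((X2 * Y2 + X1 * (Y1 + Y2)) * (X3 + X2)) 0
      Y3).congr_of_eventuallyEq (Filter.Eventually.of_forall fun t => by ring)
  have d3 : deriv (fun t =>
      X2 * Y2 * (X3 * t + X2 * (Y2 + t) + X1 * (Y1 + Y2 + t)) /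
        ((X2 * Y2 + X1 * (Y1 + Y2)) * (X3 * t + X2 * (Y2 + t)))) Y3 =
      ((X2 * Y2 * (X3 + X2 + X1) + 2 * 0 * Y3) *
          ((X2 * Y2 + X1 * (Y1 + Y2)) * (X3 * Y3 + X2 * (Y2 + Y3)))
        - X2 * Y2 * (X3 * Y3 + X2 * (Y2 + Y3) + X1 * (Y1 + Y2 + Y3)) *
          ((X2 * Y2 + X1 * (Y1 + Y2)) * (X3 + X2) + 2 * 0 * Y3)) /
        ((X2 * Y2 + X1 * (Y1 + Y2)) * (X3 * Y3 + X2 * (Y2 + Y3))) ^ 2 :=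
    (hN3.div hD3 hAB).deriv
  -- X1
  have hN4 : HasDerivAt
      (fun t => X2 * Y2 * (X3 * Y3 + X2 * (Y2 + Y3) + t * (Y1 + Y2 + Y3)))
      (X2 * Y2 * (Y1 + Y2 + Y3) + 2 * 0 * X1) X1 :=
    (quadAt (X2 * Y2 * (X3 * Y3 + X2 * (Y2 + Y3))) (X2 * Y2 * (Y1 + Y2 + Y3)) 0
      X1).congr_of_eventuallyEq (Filter.Eventually.of_forall fun t => by ring)
  have hD4 : HasDerivAt
      (fun t => (X2 * Y2 + t * (Y1 + Y2)) * (X3 * Y3 + X2 * (Y2 + Y3)))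
      ((Y1 + Y2) * (X3 * Y3 + X2 * (Y2 + Y3)) + 2 * 0 * X1) X1 :=
    (quadAt (X2 * Y2 * (X3 * Y3 + X2 * (Y2 + Y3)))
      ((Y1 + Y2) * (X3 * Y3 + X2 * (Y2 + Y3))) 0
      X1).congr_of_eventuallyEq (Filter.Eventually.of_forall fun t => by ring)
  have d4 : deriv (fun t =>
      X2 * Y2 * (X3 * Y3 + X2 * (Y2 + Y3) + t * (Y1 + Y2 + Y3)) /
        ((X2 * Y2 + t * (Y1 + Y2)) * (X3 * Y3 + X2 * (Y2 + Y3)))) X1 =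
      ((X2 * Y2 * (Y1 + Y2 + Y3) + 2 * 0 * X1) *
          ((X2 * Y2 + X1 * (Y1 + Y2)) * (X3 * Y3 + X2 * (Y2 + Y3)))
        - X2 * Y2 * (X3 * Y3 + X2 * (Y2 + Y3) + X1 * (Y1 + Y2 + Y3)) *
          ((Y1 + Y2) * (X3 * Y3 + X2 * (Y2 + Y3)) + 2 * 0 * X1)) /
        ((X2 * Y2 + X1 * (Y1 + Y2)) * (X3 * Y3 + X2 * (Y2 + Y3))) ^ 2 :=
    (hN4.div hD4 hAB).deriv
  -- X2
  have hN5 : HasDerivAt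
      (fun t => t * Y2 * (X3 * Y3 + t * (Y2 + Y3) + X1 * (Y1 + Y2 + Y3)))
      (Y2 * (X3 * Y3 + X1 * (Y1 + Y2 + Y3)) + 2 * (Y2 * (Y2 + Y3)) * X2) X2 :=
    (quadAt 0 (Y2 * (X3 * Y3 + X1 * (Y1 + Y2 + Y3))) (Y2 * (Y2 + Y3))
      X2).congr_of_eventuallyEq (Filter.Eventually.of_forall fun t => by ring)
  have hD5 : HasDerivAt
      (fun t => (t * Y2 + X1 * (Y1 + Y2)) * (X3 * Y3 + t * (Y2 + Y3)))
      (Y2 * (X3 * Y3) + X1 * (Y1 + Y2) * (Y2 + Y3) + 2 * (Y2 * (Y2 + Y3)) * X2) X2 :=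
    (quadAt (X1 * (Y1 + Y2) * (X3 * Y3))
      (Y2 * (X3 * Y3) + X1 * (Y1 + Y2) * (Y2 + Y3)) (Y2 * (Y2 + Y3))
      X2).congr_of_eventuallyEq (Filter.Eventually.of_forall fun t => by ring)
  have d5 : deriv (fun t =>
      t * Y2 * (X3 * Y3 + t * (Y2 + Y3) + X1 * (Y1 + Y2 + Y3)) /
        ((t * Y2 + X1 * (Y1 + Y2)) * (X3 * Y3 + t * (Y2 + Y3)))) X2 =
      ((Y2 * (X3 * Y3 + X1 * (Y1 + Y2 + Y3)) + 2 * (Y2 * (Y2 + Y3)) * X2) *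
          ((X2 * Y2 + X1 * (Y1 + Y2)) * (X3 * Y3 + X2 * (Y2 + Y3)))
        - X2 * Y2 * (X3 * Y3 + X2 * (Y2 + Y3) + X1 * (Y1 + Y2 + Y3)) *
          (Y2 * (X3 * Y3) + X1 * (Y1 + Y2) * (Y2 + Y3) + 2 * (Y2 * (Y2 + Y3)) * X2)) /
        ((X2 * Y2 + X1 * (Y1 + Y2)) * (X3 * Y3 + X2 * (Y2 + Y3))) ^ 2 :=
    (hN5.div hD5 hAB).deriv
  -- X3
  have hN6 : HasDerivAt
      (fun t => X2 * Y2 * (t * Y3 + X2 * (Y2 + Y3) + X1 * (Y1 + Y2 + Y3)))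
      (X2 * Y2 * Y3 + 2 * 0 * X3) X3 :=
    (quadAt (X2 * Y2 * (X2 * (Y2 + Y3) + X1 * (Y1 + Y2 + Y3))) (X2 * Y2 * Y3) 0
      X3).congr_of_eventuallyEq (Filter.Eventually.of_forall fun t => by ring)
  have hD6 : HasDerivAt
      (fun t => (X2 * Y2 + X1 * (Y1 + Y2)) * (t * Y3 + X2 * (Y2 + Y3)))
      ((X2 * Y2 + X1 * (Y1 + Y2)) * Y3 + 2 * 0 * X3) X3 :=
    (quadAt ((X2 * Y2 + X1 * (Y1 + Y2)) * (X2 * (Y2 + Y3)))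
      ((X2 * Y2 + X1 * (Y1 + Y2)) * Y3) 0
      X3).congr_of_eventuallyEq (Filter.Eventually.of_forall fun t => by ring)
  have d6 : deriv (fun t =>
      X2 * Y2 * (t * Y3 + X2 * (Y2 + Y3) + X1 * (Y1 + Y2 + Y3)) /
        ((X2 * Y2 + X1 * (Y1 + Y2)) * (t * Y3 + X2 * (Y2 + Y3)))) X3 =
      ((X2 * Y2 * Y3 + 2 * 0 * X3) *
          ((X2 * Y2 + X1 * (Y1 + Y2)) * (X3 * Y3 + X2 * (Y2 + Y3)))
        - X2 * Y2 * (X3 * Y3 + X2 * (Y2 + Y3) + X1 * (Y1 + Y2 + Y3)) *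
          ((X2 * Y2 + X1 * (Y1 + Y2)) * Y3 + 2 * 0 * X3)) /
        ((X2 * Y2 + X1 * (Y1 + Y2)) * (X3 * Y3 + X2 * (Y2 + Y3))) ^ 2 :=
    (hN6.div hD6 hAB).deriv
  simp only [tauSl3]
  rw [d1, d2, d3, d4, d5, d6]
  field_simp
  ring
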